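/- Let X₁, X₂, X₃ be independent random variables, each exponentially distributed with rates λ₁, λ₂, λ₃ > 0 respectively, and fix r ∈ (0, 1/2). Then as s → ∞, Pr[ (1+sX₁)(1+sX₂)(1+sX₃) < (1+s)^{2r} ] is asymptotically equivalent to 2·(r·ln s)²·λ₁λ₂λ₃·s^{−(3−2r)}, i.e. the ratio of the two quantities tends to 1. -/

import Mathlib

open MeasureTheory ProbabilityTheory Filter Asymptotics Real Set Topology

namespace Stmt19


lemma prod_mono' {α β : Type*} [MeasurableSpace α] [MeasurableSpace β]
    {μ₁ μ₂ : Measure α} {ν₁ ν₂ : Measure β} [SFinite ν₁] [SFinite ν₂]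
    (h₁ : μ₁ ≤ μ₂) (h₂ : ν₁ ≤ ν₂) : μ₁.prod ν₁ ≤ μ₂.prod ν₂ := by
  refine Measure.le_iff.2 fun s hs => ?_
  rw [Measure.prod_apply hs, Measure.prod_apply hs]
  exact le_trans (lintegral_mono fun x => Measure.le_iff'.1 h₂ _)
    (lintegral_mono' h₁ le_rfl)

lemma smul_prod' {α β : Type*} [MeasurableSpace α] [MeasurableSpace β]
    (c : ENNReal) (μ : Measure α) (ν : Measure β) [SFinite ν] :
    (c • μ).prod ν = c • (μ.prod ν) := by
  refine Measure.ext fun s hs => ?_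
  rw [Measure.prod_apply hs, Measure.smul_apply, smul_eq_mul,
    Measure.prod_apply hs, lintegral_smul_measure, smul_eq_mul]

lemma prod_smul' {α β : Type*} [MeasurableSpace α] [MeasurableSpace β]
    (c : ENNReal) (μ : Measure α) (ν : Measure β) [SFinite ν] :
    μ.prod (c • ν) = c • (μ.prod ν) := by
  refine Measure.ext fun s hs => ?_
  rw [Measure.prod_apply hs, Measure.smul_apply, smul_eq_mul, Measure.prod_apply hs]
  simp_rw [Measure.smul_apply, smul_eq_mul]
  rw [lintegral_const_mul _ (measurable_measure_prodMk_left hs)]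

lemma expMeasure_le (lam : ℝ) (hl : 0 < lam) :
    expMeasure lam ≤ ENNReal.ofReal lam • volume.restrict (Ici 0) := by
  refine Measure.le_iff.2 fun s hs => ?_
  have : expMeasure lam s = ∫⁻ x in s, exponentialPDF lam x := by
    rw [show expMeasure lam = volume.withDensity (exponentialPDF lam) from rfl,
      withDensity_apply _ hs]
  rw [this, Measure.smul_apply, Measure.restrict_apply hs, smul_eq_mul]
  calc ∫⁻ x in s, exponentialPDF lam x
      ≤ ∫⁻ x in s, (Ici 0).indicator (fun _ => ENNReal.ofReal lam) x := by
        refine lintegral_mono fun x => ?_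
        rw [exponentialPDF_eq]
        by_cases hx : 0 ≤ x
        · rw [if_pos hx, indicator_of_mem (mem_Ici.2 hx)]
          exact ENNReal.ofReal_le_ofReal (by
            nlinarith [exp_le_one_iff.2 (by nlinarith : -(lam*x) ≤ 0), exp_pos (-(lam*x))])
        · rw [if_neg hx, indicator_of_notMem (by simpa using hx)]; simp
    _ = ENNReal.ofReal lam * volume (s ∩ Ici 0) := by
        rw [lintegral_indicator measurableSet_Ici, setLIntegral_const,
          Measure.restrict_apply measurableSet_Ici, inter_comm]

lemma expMeasure_ge (lam M : ℝ) (hl : 0 < lam) (hM : 0 ≤ M) :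
    ENNReal.ofReal (lam * Real.exp (-(lam * M))) • volume.restrict (Icc 0 M) ≤ expMeasure lam := by
  refine Measure.le_iff.2 fun s hs => ?_
  have : expMeasure lam s = ∫⁻ x in s, exponentialPDF lam x := by
    rw [show expMeasure lam = volume.withDensity (exponentialPDF lam) from rfl,
      withDensity_apply _ hs]
  rw [this, Measure.smul_apply, Measure.restrict_apply hs, smul_eq_mul]
  calc ENNReal.ofReal (lam * Real.exp (-(lam * M))) * volume (s ∩ Icc 0 M)
      = ∫⁻ x in s, (Icc 0 M).indicator (fun _ => ENNReal.ofReal (lam * Real.exp (-(lam*M)))) x := by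
        rw [lintegral_indicator measurableSet_Icc, setLIntegral_const,
          Measure.restrict_apply measurableSet_Icc, inter_comm]
    _ ≤ ∫⁻ x in s, exponentialPDF lam x := by
        refine lintegral_mono fun x => ?_
        by_cases hx : x ∈ Icc 0 M
        · rw [indicator_of_mem hx, exponentialPDF_of_nonneg hx.1]
          exact ENNReal.ofReal_le_ofReal
            (mul_le_mul_of_nonneg_left (exp_le_exp.2 (by nlinarith [hx.2])) hl.le)
        · rw [indicator_of_notMem hx]; simp



lemma vol1 {s : ℝ} (hs : 0 < s) (u : ℝ) :
    volume {z : ℝ | 0 ≤ z ∧ 1 + s * z < u} = ENNReal.ofReal ((u - 1) / s) := by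
  have : {z : ℝ | 0 ≤ z ∧ 1 + s * z < u} = Ico 0 ((u - 1) / s) := by
    ext z
    simp only [mem_setOf_eq, mem_Ico]
    constructor
    · rintro ⟨h1, h2⟩; exact ⟨h1, by rw [lt_div_iff₀ hs]; linarith⟩
    · rintro ⟨h1, h2⟩; rw [lt_div_iff₀ hs] at h2; exact ⟨h1, by linarith⟩
  rw [this, Real.volume_Ico, sub_zero]

lemma meas2 (s u : ℝ) :
    MeasurableSet {p : ℝ × ℝ | 0 ≤ p.1 ∧ 0 ≤ p.2 ∧ (1 + s * p.1) * (1 + s * p.2) < u} := by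
  apply MeasurableSet.inter (measurableSet_le measurable_const measurable_fst)
  apply MeasurableSet.inter (measurableSet_le measurable_const measurable_snd)
  exact measurableSet_lt ((continuous_const.add (continuous_const.mul continuous_fst)).mul
    (continuous_const.add (continuous_const.mul continuous_snd))).measurable measurable_const

lemma vol2_zero {s u : ℝ} (hs : 0 < s) (hu : u ≤ 1) :
    {p : ℝ × ℝ | 0 ≤ p.1 ∧ 0 ≤ p.2 ∧ (1 + s * p.1) * (1 + s * p.2) < u} = ∅ := by
  ext p
  simp only [mem_setOf_eq, mem_empty_iff_false, iff_false]
  rintro ⟨h1, h2, h3⟩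
  nlinarith [mul_nonneg (mul_nonneg hs.le h1) (mul_nonneg hs.le h2),
    mul_nonneg hs.le h1, mul_nonneg hs.le h2]

lemma vol2 {s u : ℝ} (hs : 0 < s) (hu : 1 ≤ u) :
    volume {p : ℝ × ℝ | 0 ≤ p.1 ∧ 0 ≤ p.2 ∧ (1 + s * p.1) * (1 + s * p.2) < u}
      = ENNReal.ofReal ((u * Real.log u - u + 1) / s ^ 2) := by
  set M := (u - 1) / s with hM
  have hM0 : 0 ≤ M := div_nonneg (by linarith) hs.le
  have hu0 : 0 < u := by linarith
  rw [Measure.volume_eq_prod, Measure.prod_apply (meas2 s u)]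
  have hslice : ∀ x : ℝ,
      volume (Prod.mk x ⁻¹' {p : ℝ × ℝ | 0 ≤ p.1 ∧ 0 ≤ p.2 ∧ (1 + s * p.1) * (1 + s * p.2) < u})
      = (Ico 0 M).indicator (fun x => ENNReal.ofReal ((u / (1 + s * x) - 1) / s)) x := by
    intro x
    by_cases hx : x ∈ Ico 0 M
    · have hx0 : 0 ≤ x := hx.1
      have hw : (0:ℝ) < 1 + s * x := by nlinarith
      have : Prod.mk x ⁻¹' {p : ℝ × ℝ | 0 ≤ p.1 ∧ 0 ≤ p.2 ∧ (1 + s * p.1) * (1 + s * p.2) < u}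
          = {z : ℝ | 0 ≤ z ∧ 1 + s * z < u / (1 + s * x)} := by
        ext z
        simp only [mem_preimage, mem_setOf_eq]
        rw [lt_div_iff₀ hw]
        constructor
        · rintro ⟨_, h2, h3⟩; exact ⟨h2, by nlinarith⟩
        · rintro ⟨h2, h3⟩; exact ⟨hx0, h2, by nlinarith⟩
      rw [this, vol1 hs, indicator_of_mem hx]
    · rw [indicator_of_notMem hx]
      simp only [mem_Ico, not_and, not_lt] at hx
      by_cases hx0' : 0 ≤ x
      case neg =>
        have hx0 : x < 0 := not_le.1 hx0'
        have : Prod.mk x ⁻¹' {p : ℝ × ℝ | 0 ≤ p.1 ∧ 0 ≤ p.2 ∧ (1 + s * p.1) * (1 + s * p.2) < u}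
            = ∅ := by
          ext z; simp only [mem_preimage, mem_setOf_eq, mem_empty_iff_false, iff_false]
          rintro ⟨h1, _, _⟩; linarith
        rw [this]; simp
      case pos =>
        have hxM : M ≤ x := hx hx0'
        have hx0 : 0 ≤ x := hx0'
        have hw : (0:ℝ) < 1 + s * x := by nlinarith
        have hu1 : u / (1 + s * x) ≤ 1 := by
          rw [div_le_one hw]
          have : s * M ≤ s * x := mul_le_mul_of_nonneg_left hxM hs.le
          rw [hM] at this
          rw [mul_div_cancel₀ _ hs.ne'] at this
          linarith
        have : Prod.mk x ⁻¹' {p : ℝ × ℝ | 0 ≤ p.1 ∧ 0 ≤ p.2 ∧ (1 + s * p.1) * (1 + s * p.2) < u}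
            = {z : ℝ | 0 ≤ z ∧ 1 + s * z < u / (1 + s * x)} := by
          ext z
          simp only [mem_preimage, mem_setOf_eq]
          rw [lt_div_iff₀ hw]
          constructor
          · rintro ⟨_, h2, h3⟩; exact ⟨h2, by nlinarith⟩
          · rintro ⟨h2, h3⟩; exact ⟨hx0, h2, by nlinarith⟩
        rw [this, vol1 hs]
        rw [ENNReal.ofReal_eq_zero]
        apply div_nonpos_of_nonpos_of_nonneg _ hs.le
        linarith
  simp_rw [hslice]
  rw [lintegral_indicator measurableSet_Ico,
    setLIntegral_congr (Ico_ae_eq_Ioc (μ := volume) (a := (0:ℝ)) (b := M))]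
  have hf_cont : ContinuousOn (fun x : ℝ => (u / (1 + s * x) - 1) / s) (Icc 0 M) := by
    apply ContinuousOn.div_const
    apply ContinuousOn.sub _ continuousOn_const
    apply ContinuousOn.div continuousOn_const (by fun_prop)
    intro x hx
    have := hx.1
    nlinarith [hx.1]
  have hInt : IntegrableOn (fun x : ℝ => (u / (1 + s * x) - 1) / s) (Ioc 0 M) := by
    exact (hf_cont.integrableOn_Icc).mono_set Ioc_subset_Icc_self
  rw [← ofReal_integral_eq_lintegral_ofReal hInt]
  · rw [← intervalIntegral.integral_of_le hM0]
    have hc : ∀ x ∈ uIcc (0:ℝ) M, HasDerivAt (fun x : ℝ => ((u / s) * Real.log (1 + s * x) - x)/s)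
        ((u / (1 + s * x) - 1) / s) x := by
      intro x hx
      rw [uIcc_of_le hM0] at hx
      have hw : (0:ℝ) < 1 + s * x := by nlinarith [hx.1]
      have h1 : HasDerivAt (fun x : ℝ => 1 + s * x) s x := by
        simpa using ((hasDerivAt_id x).const_mul s).const_add 1
      have h2 : HasDerivAt (fun x : ℝ => Real.log (1 + s * x)) (s / (1 + s * x)) x :=
        h1.log hw.ne'
      have h3 : HasDerivAt (fun x : ℝ => (u / s) * Real.log (1 + s * x) - x)
          ((u / s) * (s / (1 + s * x)) - 1) x := (h2.const_mul (u/s)).sub (hasDerivAt_id x)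
      refine (h3.div_const s).congr_deriv ?_
      field_simp
    rw [intervalIntegral.integral_eq_sub_of_hasDerivAt hc]
    · have : (1 : ℝ) + s * M = u := by
        rw [hM, mul_div_cancel₀ _ hs.ne']; ring
      rw [this]
      simp only [mul_zero, add_zero, Real.log_one]
      congr 1
      field_simp
      rw [mul_comm s M, hM, div_mul_cancel₀ _ hs.ne']
      ring
    · exact (intervalIntegrable_iff_integrableOn_Ioc_of_le hM0).2 hInt
  · refine (ae_restrict_iff' measurableSet_Ioc).2 (ae_of_all _ fun x hx => ?_)
    have hw : (0:ℝ) < 1 + s * x := by nlinarith [hx.1.le]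
    have hle : 1 + s * x ≤ u := by
      have : s * x ≤ s * M := mul_le_mul_of_nonneg_left hx.2 hs.le
      rw [hM, mul_div_cancel₀ _ hs.ne'] at this
      linarith
    have : (1:ℝ) ≤ u / (1 + s * x) := (one_le_div hw).2 hle
    exact div_nonneg (by linarith) hs.le


lemma meas3 (s t : ℝ) :
    MeasurableSet {p : ℝ × ℝ × ℝ | 0 ≤ p.1 ∧ 0 ≤ p.2.1 ∧ 0 ≤ p.2.2 ∧
      (1 + s * p.1) * (1 + s * p.2.1) * (1 + s * p.2.2) < t} := by
  apply MeasurableSet.inter (measurableSet_le measurable_const measurable_fst)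
  apply MeasurableSet.inter (measurableSet_le measurable_const (measurable_fst.comp measurable_snd))
  apply MeasurableSet.inter (measurableSet_le measurable_const (measurable_snd.comp measurable_snd))
  exact measurableSet_lt (((continuous_const.add (continuous_const.mul continuous_fst)).mul
    (continuous_const.add (continuous_const.mul (continuous_fst.comp continuous_snd)))).mul
    (continuous_const.add (continuous_const.mul (continuous_snd.comp continuous_snd)))).measurable
    measurable_const



lemma vol3 {s t : ℝ} (hs : 0 < s) (ht : 1 ≤ t) :
    volume {p : ℝ × ℝ × ℝ | 0 ≤ p.1 ∧ 0 ≤ p.2.1 ∧ 0 ≤ p.2.2 ∧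
        (1 + s * p.1) * (1 + s * p.2.1) * (1 + s * p.2.2) < t}
      = ENNReal.ofReal ((t * (Real.log t) ^ 2 / 2 - t * Real.log t + t - 1) / s ^ 3) := by
  set M := (t - 1) / s with hM
  have hM0 : 0 ≤ M := div_nonneg (by linarith) hs.le
  have ht0 : 0 < t := by linarith
  have hsM : 1 + s * M = t := by rw [hM, mul_div_cancel₀ _ hs.ne']; ring
  rw [Measure.volume_eq_prod, Measure.prod_apply (meas3 s t)]
  have hslice : ∀ x : ℝ,
      volume (Prod.mk x ⁻¹' {p : ℝ × ℝ × ℝ | 0 ≤ p.1 ∧ 0 ≤ p.2.1 ∧ 0 ≤ p.2.2 ∧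
        (1 + s * p.1) * (1 + s * p.2.1) * (1 + s * p.2.2) < t})
      = (Ico 0 M).indicator (fun x => ENNReal.ofReal
          ((t / (1 + s * x) * Real.log (t / (1 + s * x)) - t / (1 + s * x) + 1) / s ^ 2)) x := by
    intro x
    by_cases hx : x ∈ Ico 0 M
    · have hx0 : 0 ≤ x := hx.1
      have hw : (0:ℝ) < 1 + s * x := by nlinarith
      have hwt : 1 + s * x < t := by nlinarith [hx.2, hsM]
      have hu1 : 1 ≤ t / (1 + s * x) := le_of_lt ((one_lt_div hw).2 hwt)
      have hset : Prod.mk x ⁻¹' {p : ℝ × ℝ × ℝ | 0 ≤ p.1 ∧ 0 ≤ p.2.1 ∧ 0 ≤ p.2.2 ∧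
            (1 + s * p.1) * (1 + s * p.2.1) * (1 + s * p.2.2) < t}
          = {q : ℝ × ℝ | 0 ≤ q.1 ∧ 0 ≤ q.2 ∧ (1 + s * q.1) * (1 + s * q.2) < t / (1 + s * x)} := by
        ext q
        simp only [mem_preimage, mem_setOf_eq]
        rw [lt_div_iff₀ hw]
        constructor
        · rintro ⟨_, h2, h3, h4⟩; exact ⟨h2, h3, by nlinarith⟩
        · rintro ⟨h2, h3, h4⟩; exact ⟨hx0, h2, h3, by nlinarith⟩
      rw [hset, vol2 hs hu1, indicator_of_mem hx]
    · rw [indicator_of_notMem hx]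
      simp only [mem_Ico, not_and, not_lt] at hx
      by_cases hx0' : 0 ≤ x
      case neg =>
        have hset : Prod.mk x ⁻¹' {p : ℝ × ℝ × ℝ | 0 ≤ p.1 ∧ 0 ≤ p.2.1 ∧ 0 ≤ p.2.2 ∧
              (1 + s * p.1) * (1 + s * p.2.1) * (1 + s * p.2.2) < t} = ∅ := by
          ext q; simp only [mem_preimage, mem_setOf_eq, mem_empty_iff_false, iff_false]
          rintro ⟨h1, _⟩; exact hx0' h1
        rw [hset]; simp
      case pos =>
        have hxM : M ≤ x := hx hx0'
        have hw : (0:ℝ) < 1 + s * x := by nlinarith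
        have hu1 : t / (1 + s * x) ≤ 1 := by
          rw [div_le_one hw]
          nlinarith [mul_le_mul_of_nonneg_left hxM hs.le]
        have hset : Prod.mk x ⁻¹' {p : ℝ × ℝ × ℝ | 0 ≤ p.1 ∧ 0 ≤ p.2.1 ∧ 0 ≤ p.2.2 ∧
              (1 + s * p.1) * (1 + s * p.2.1) * (1 + s * p.2.2) < t}
            = {q : ℝ × ℝ | 0 ≤ q.1 ∧ 0 ≤ q.2 ∧ (1 + s * q.1) * (1 + s * q.2) < t / (1 + s * x)} := by
          ext q
          simp only [mem_preimage, mem_setOf_eq]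
          rw [lt_div_iff₀ hw]
          constructor
          · rintro ⟨_, h2, h3, h4⟩; exact ⟨h2, h3, by nlinarith⟩
          · rintro ⟨h2, h3, h4⟩; exact ⟨hx0', h2, h3, by nlinarith⟩
        rw [hset, vol2_zero hs hu1]
        simp
  simp_rw [hslice]
  rw [lintegral_indicator measurableSet_Ico,
    setLIntegral_congr (Ico_ae_eq_Ioc (μ := volume) (a := (0:ℝ)) (b := M))]
  have hwpos : ∀ x ∈ Icc (0:ℝ) M, (0:ℝ) < 1 + s * x := by
    intro x hx; nlinarith [hx.1]
  have hf_cont : ContinuousOn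
      (fun x : ℝ => (t / (1 + s * x) * Real.log (t / (1 + s * x)) - t / (1 + s * x) + 1) / s ^ 2)
      (Icc 0 M) := by
    have hcw : ContinuousOn (fun x : ℝ => t / (1 + s * x)) (Icc 0 M) := by
      apply ContinuousOn.div continuousOn_const (by fun_prop)
      intro x hx; exact (hwpos x hx).ne'
    apply ContinuousOn.div_const
    apply ContinuousOn.add _ continuousOn_const
    apply ContinuousOn.sub _ hcw
    apply ContinuousOn.mul hcw
    apply ContinuousOn.log hcw
    intro x hx
    exact (div_pos ht0 (hwpos x hx)).ne'
  have hInt : IntegrableOn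
      (fun x : ℝ => (t / (1 + s * x) * Real.log (t / (1 + s * x)) - t / (1 + s * x) + 1) / s ^ 2)
      (Ioc 0 M) := (hf_cont.integrableOn_Icc).mono_set Ioc_subset_Icc_self
  rw [← ofReal_integral_eq_lintegral_ofReal hInt]
  · rw [← intervalIntegral.integral_of_le hM0]
    have hc : ∀ x ∈ uIcc (0:ℝ) M, HasDerivAt
        (fun x : ℝ => (-(t / (2 * s)) * (Real.log t - Real.log (1 + s * x)) ^ 2
          - (t / s) * Real.log (1 + s * x) + x) / s ^ 2)
        ((t / (1 + s * x) * Real.log (t / (1 + s * x)) - t / (1 + s * x) + 1) / s ^ 2) x := by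
      intro x hx
      rw [uIcc_of_le hM0] at hx
      have hw : (0:ℝ) < 1 + s * x := hwpos x hx
      have h1 : HasDerivAt (fun x : ℝ => 1 + s * x) s x := by
        simpa using ((hasDerivAt_id x).const_mul s).const_add 1
      have h2 : HasDerivAt (fun x : ℝ => Real.log (1 + s * x)) (s / (1 + s * x)) x :=
        h1.log hw.ne'
      have h3 : HasDerivAt (fun x : ℝ => (Real.log t - Real.log (1 + s * x)) ^ 2)
          (2 * (Real.log t - Real.log (1 + s * x)) * (-(s / (1 + s * x)))) x := by
        have := ((hasDerivAt_const x (Real.log t)).fun_sub h2).fun_pow 2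
        simpa using this
      have h4 : HasDerivAt
          (fun x : ℝ => -(t / (2 * s)) * (Real.log t - Real.log (1 + s * x)) ^ 2
            - (t / s) * Real.log (1 + s * x) + x)
          (-(t / (2 * s)) * (2 * (Real.log t - Real.log (1 + s * x)) * (-(s / (1 + s * x))))
            - (t / s) * (s / (1 + s * x)) + 1) x :=
        ((h3.const_mul (-(t / (2 * s)))).sub (h2.const_mul (t / s))).add (hasDerivAt_id x)
      refine (h4.div_const (s ^ 2)).congr_deriv ?_
      rw [Real.log_div ht0.ne' hw.ne']
      field_simp
    rw [intervalIntegral.integral_eq_sub_of_hasDerivAt hc]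
    · rw [hsM]
      simp only [mul_zero, add_zero, Real.log_one, sub_zero]
      congr 1
      field_simp
      ring_nf
      linear_combination (2*t-2) * mul_inv_cancel₀ hs.ne'
    · exact (intervalIntegrable_iff_integrableOn_Ioc_of_le hM0).2 hInt
  · refine (ae_restrict_iff' measurableSet_Ioc).2 (ae_of_all _ fun x hx => ?_)
    have hw : (0:ℝ) < 1 + s * x := by nlinarith [hx.1.le]
    have hle : 1 + s * x ≤ t := by nlinarith [mul_le_mul_of_nonneg_left hx.2 hs.le]
    have hv1 : (1:ℝ) ≤ t / (1 + s * x) := (one_le_div hw).2 hle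
    set v := t / (1 + s * x)
    have hlog : 1 - 1/v ≤ Real.log v := by
      have h := Real.log_le_sub_one_of_pos (show (0:ℝ) < 1/v by positivity)
      rw [Real.log_div one_ne_zero (by positivity : v ≠ 0)] at h
      simp only [Real.log_one] at h
      linarith
    have hv0 : (0:ℝ) < v := by linarith
    have : v - 1 ≤ v * Real.log v := by
      have := mul_le_mul_of_nonneg_left hlog hv0.le
      have hvv : v * (1 - 1/v) = v - 1 := by field_simp
      nlinarith
    apply div_nonneg _ (by positivity)
    linarith


end Stmt19
namespace Stmt19
open MeasureTheory ProbabilityTheory Filter Asymptotics Real Set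

lemma triple_apply (c0 c1 c2 : ENNReal) {A : Set ℝ} (hA : MeasurableSet A)
    {S : Set (ℝ × ℝ × ℝ)} (hS : MeasurableSet S) :
    ((c0 • volume.restrict A).prod
        ((c1 • volume.restrict A).prod (c2 • volume.restrict A))) S
      = c0 * (c1 * (c2 * volume (S ∩ A ×ˢ (A ×ˢ A)))) := by
  rw [smul_prod', smul_prod', prod_smul', prod_smul', prod_smul', Measure.prod_restrict,
    ← Measure.volume_eq_prod, Measure.prod_restrict, ← Measure.volume_eq_prod,
    Measure.smul_apply, Measure.smul_apply, Measure.smul_apply,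
    Measure.restrict_apply hS, smul_eq_mul, smul_eq_mul, smul_eq_mul]

lemma W_nonneg {t : ℝ} (ht : 1 ≤ t) :
    0 ≤ t * (Real.log t) ^ 2 / 2 - t * Real.log t + t - 1 := by
  have ht0 : (0:ℝ) < t := by linarith
  set L := Real.log t with hL
  have hL0 : 0 ≤ L := Real.log_nonneg ht
  have hexp : 1 + L + L ^ 2 / 2 ≤ t := by
    have h := Real.sum_le_exp_of_nonneg hL0 3
    simp [Finset.sum_range_succ, Nat.factorial] at h
    rw [← Real.exp_log ht0]
    nlinarith [h]
  nlinarith [sq_nonneg (L - 1), sq_nonneg L, sq_nonneg (L * L), mul_nonneg hL0 hL0]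

end Stmt19
open MeasureTheory ProbabilityTheory Filter Asymptotics Real

open Stmt19 in
set_option maxHeartbeats 2000000 in
/-- the outage probability of a parallel fading channel with three
independent exponential links is asymptotically `2 (r ln s)² λ₁λ₂λ₃ s^{-(3-2r)}`. -/
theorem stmt_19
    {Ω : Type*} [MeasurableSpace Ω] (μ : Measure Ω) [IsProbabilityMeasure μ]
    (X : Fin 3 → Ω → ℝ) (lam : Fin 3 → ℝ) (hlam : ∀ i, 0 < lam i)
    (hmeas : ∀ i, Measurable (X i))
    (hindep : iIndepFun X μ)
    (hlaw : ∀ i, μ.map (X i) = expMeasure (lam i))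
    (r : ℝ) (hr : r ∈ Set.Ioo (0:ℝ) (1/2)) :
    (fun s : ℝ => (μ {ω |
        (1 + s * X 0 ω) * (1 + s * X 1 ω) * (1 + s * X 2 ω) < (1+s) ^ (2*r)}).toReal)
      ~[atTop]
      (fun s : ℝ =>
        2 * (r * Real.log s)^2 * (lam 0 * lam 1 * lam 2) * s ^ (-(3-2*r))) := by
  obtain ⟨hr0, hr2⟩ := hr
  haveI i0 : IsProbabilityMeasure (expMeasure (lam 0)) := isProbabilityMeasure_expMeasure (hlam 0)
  haveI i1 : IsProbabilityMeasure (expMeasure (lam 1)) := isProbabilityMeasure_expMeasure (hlam 1)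
  haveI i2 : IsProbabilityMeasure (expMeasure (lam 2)) := isProbabilityMeasure_expMeasure (hlam 2)
  set κ : Measure (ℝ × ℝ × ℝ) :=
    (expMeasure (lam 0)).prod ((expMeasure (lam 1)).prod (expMeasure (lam 2))) with hκ
  -- notation
  set t : ℝ → ℝ := fun s => (1+s) ^ (2*r) with htdef
  set M : ℝ → ℝ := fun s => (t s - 1) / s with hMdef
  set u : ℝ → ℝ := fun s =>
    (t s * (Real.log (t s)) ^ 2 / 2 - t s * Real.log (t s) + t s - 1) / s ^ 3 with hudef
  set S : ℝ → Set (ℝ × ℝ × ℝ) := fun s =>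
    {p : ℝ × ℝ × ℝ | (1 + s * p.1) * (1 + s * p.2.1) * (1 + s * p.2.2) < t s} with hSdef
  have measS : ∀ s, MeasurableSet (S s) := by
    intro s
    exact measurableSet_lt (((continuous_const.add (continuous_const.mul continuous_fst)).mul
      (continuous_const.add (continuous_const.mul (continuous_fst.comp continuous_snd)))).mul
      (continuous_const.add (continuous_const.mul
        (continuous_snd.comp continuous_snd)))).measurable measurable_const
  -- step A : the law of the triple
  have hmap : μ.map (fun ω => (X 0 ω, (X 1 ω, X 2 ω))) = κ := by
    have h12 : μ.map (fun ω => (X 1 ω, X 2 ω)) = (expMeasure (lam 1)).prod (expMeasure (lam 2)) := by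
      rw [← hlaw 1, ← hlaw 2]
      exact (indepFun_iff_map_prod_eq_prod_map_map (hmeas 1).aemeasurable
        (hmeas 2).aemeasurable).1 (hindep.indepFun (by decide))
    have h0 : IndepFun (X 0) (fun ω => (X 1 ω, X 2 ω)) μ :=
      (hindep.indepFun_prodMk hmeas 1 2 0 (by decide) (by decide)).symm
    rw [hκ, ← hlaw 0, ← h12]
    exact (indepFun_iff_map_prod_eq_prod_map_map (hmeas 0).aemeasurable
      ((hmeas 1).prodMk (hmeas 2)).aemeasurable).1 h0
  have hps : ∀ s : ℝ, μ {ω |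
      (1 + s * X 0 ω) * (1 + s * X 1 ω) * (1 + s * X 2 ω) < (1+s) ^ (2*r)} = κ (S s) := by
    intro s
    rw [← hmap, Measure.map_apply ((hmeas 0).prodMk ((hmeas 1).prodMk (hmeas 2))) (measS s)]
    rfl
  set p : ℝ → ℝ := fun s => (κ (S s)).toReal with hpdef
  set c : ℝ := lam 0 * (lam 1 * lam 2) with hcdef
  have hc : 0 < c := mul_pos (hlam 0) (mul_pos (hlam 1) (hlam 2))
  set d : ℝ → ℝ := fun s => (lam 0 * Real.exp (-(lam 0 * M s))) *
    ((lam 1 * Real.exp (-(lam 1 * M s))) * (lam 2 * Real.exp (-(lam 2 * M s)))) with hddef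
  -- step B : bounds
  haveI iκ : IsProbabilityMeasure κ := by rw [hκ]; infer_instance
  have hbound : ∀ s : ℝ, 1 ≤ s → d s * u s ≤ p s ∧ p s ≤ c * u s := by
    intro s hs
    have hs0 : (0:ℝ) < s := by linarith
    have ht1 : (1:ℝ) ≤ t s := by
      have := Real.rpow_le_rpow (by norm_num : (0:ℝ) ≤ 1)
        (show (1:ℝ) ≤ 1+s by linarith) (by linarith : (0:ℝ) ≤ 2*r)
      simpa [Real.one_rpow] using this
    have hM0' : 0 ≤ M s := div_nonneg (by linarith) hs0.le
    have hsM : 1 + s * M s = t s := by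
      rw [hMdef]; simp only; field_simp; ring
    have hu0 : 0 ≤ u s := by
      rw [hudef]; simp only
      exact div_nonneg (W_nonneg ht1) (by positivity)
    have hvol : volume {q : ℝ × ℝ × ℝ | 0 ≤ q.1 ∧ 0 ≤ q.2.1 ∧ 0 ≤ q.2.2 ∧
        (1 + s * q.1) * (1 + s * q.2.1) * (1 + s * q.2.2) < t s} = ENNReal.ofReal (u s) :=
      vol3 hs0 ht1
    have hSm := measS s
    constructor
    · -- lower bound
      have hle2 : (ENNReal.ofReal (lam 0 * Real.exp (-(lam 0 * M s)))
            • volume.restrict (Icc 0 (M s))).prod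
          ((ENNReal.ofReal (lam 1 * Real.exp (-(lam 1 * M s)))
            • volume.restrict (Icc 0 (M s))).prod
          (ENNReal.ofReal (lam 2 * Real.exp (-(lam 2 * M s)))
            • volume.restrict (Icc 0 (M s)))) ≤ κ :=
        prod_mono' (expMeasure_ge _ _ (hlam 0) hM0')
          (prod_mono' (expMeasure_ge _ _ (hlam 1) hM0') (expMeasure_ge _ _ (hlam 2) hM0'))
      have hsub : {q : ℝ × ℝ × ℝ | 0 ≤ q.1 ∧ 0 ≤ q.2.1 ∧ 0 ≤ q.2.2 ∧
          (1 + s * q.1) * (1 + s * q.2.1) * (1 + s * q.2.2) < t s}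
          ⊆ S s ∩ (Icc 0 (M s) ×ˢ (Icc 0 (M s) ×ˢ Icc 0 (M s))) := by
        rintro q ⟨h1, h2, h3, h4⟩
        have f1 : (1:ℝ) ≤ 1 + s * q.1 := by nlinarith
        have f2 : (1:ℝ) ≤ 1 + s * q.2.1 := by nlinarith
        have f3 : (1:ℝ) ≤ 1 + s * q.2.2 := by nlinarith
        have g1 : q.1 ≤ M s := by
          have e1 : (1:ℝ) ≤ (1 + s * q.2.1) * (1 + s * q.2.2) := by nlinarith
          have e2 := mul_le_mul_of_nonneg_left e1 (show (0:ℝ) ≤ 1 + s * q.1 by linarith)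
          have e3 : s * q.1 < s * M s := by nlinarith
          exact le_of_lt ((mul_lt_mul_iff_right₀ hs0).1 e3)
        have g2 : q.2.1 ≤ M s := by
          have e1 : (1:ℝ) ≤ (1 + s * q.1) * (1 + s * q.2.2) := by nlinarith
          have e2 := mul_le_mul_of_nonneg_left e1 (show (0:ℝ) ≤ 1 + s * q.2.1 by linarith)
          have e3 : s * q.2.1 < s * M s := by nlinarith
          exact le_of_lt ((mul_lt_mul_iff_right₀ hs0).1 e3)
        have g3 : q.2.2 ≤ M s := by
          have e1 : (1:ℝ) ≤ (1 + s * q.1) * (1 + s * q.2.1) := by nlinarith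
          have e2 := mul_le_mul_of_nonneg_left e1 (show (0:ℝ) ≤ 1 + s * q.2.2 by linarith)
          have e3 : s * q.2.2 < s * M s := by nlinarith
          exact le_of_lt ((mul_lt_mul_iff_right₀ hs0).1 e3)
        exact ⟨h4, ⟨h1, g1⟩, ⟨h2, g2⟩, ⟨h3, g3⟩⟩
      have hlow : ENNReal.ofReal (lam 0 * Real.exp (-(lam 0 * M s))) *
          (ENNReal.ofReal (lam 1 * Real.exp (-(lam 1 * M s))) *
          (ENNReal.ofReal (lam 2 * Real.exp (-(lam 2 * M s))) * ENNReal.ofReal (u s)))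
          ≤ κ (S s) := by
        calc ENNReal.ofReal (lam 0 * Real.exp (-(lam 0 * M s))) *
            (ENNReal.ofReal (lam 1 * Real.exp (-(lam 1 * M s))) *
            (ENNReal.ofReal (lam 2 * Real.exp (-(lam 2 * M s))) * ENNReal.ofReal (u s)))
            ≤ ENNReal.ofReal (lam 0 * Real.exp (-(lam 0 * M s))) *
              (ENNReal.ofReal (lam 1 * Real.exp (-(lam 1 * M s))) *
              (ENNReal.ofReal (lam 2 * Real.exp (-(lam 2 * M s))) *
                volume (S s ∩ (Icc 0 (M s) ×ˢ (Icc 0 (M s) ×ˢ Icc 0 (M s)))))) := by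
              rw [← hvol]
              exact mul_le_mul_right (mul_le_mul_right (mul_le_mul_right
                (measure_mono hsub) _) _) _
          _ = ((ENNReal.ofReal (lam 0 * Real.exp (-(lam 0 * M s)))
                • volume.restrict (Icc 0 (M s))).prod
              ((ENNReal.ofReal (lam 1 * Real.exp (-(lam 1 * M s)))
                • volume.restrict (Icc 0 (M s))).prod
              (ENNReal.ofReal (lam 2 * Real.exp (-(lam 2 * M s)))
                • volume.restrict (Icc 0 (M s))))) (S s) :=
              (triple_apply _ _ _ measurableSet_Icc hSm).symm
          _ ≤ κ (S s) := Measure.le_iff'.1 hle2 (S s)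
      have := ENNReal.toReal_mono (measure_ne_top κ (S s)) hlow
      rw [ENNReal.toReal_mul, ENNReal.toReal_mul, ENNReal.toReal_mul,
        ENNReal.toReal_ofReal (mul_nonneg (hlam 0).le (Real.exp_nonneg _)),
        ENNReal.toReal_ofReal (mul_nonneg (hlam 1).le (Real.exp_nonneg _)),
        ENNReal.toReal_ofReal (mul_nonneg (hlam 2).le (Real.exp_nonneg _)),
        ENNReal.toReal_ofReal hu0] at this
      calc d s * u s = lam 0 * Real.exp (-(lam 0 * M s)) *
          (lam 1 * Real.exp (-(lam 1 * M s)) * (lam 2 * Real.exp (-(lam 2 * M s)) * u s)) := by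
            rw [hddef]; ring
        _ ≤ p s := this
    · -- upper bound
      have hle1 : κ ≤ (ENNReal.ofReal (lam 0) • volume.restrict (Ici 0)).prod
          ((ENNReal.ofReal (lam 1) • volume.restrict (Ici 0)).prod
          (ENNReal.ofReal (lam 2) • volume.restrict (Ici 0))) :=
        prod_mono' (expMeasure_le _ (hlam 0))
          (prod_mono' (expMeasure_le _ (hlam 1)) (expMeasure_le _ (hlam 2)))
      have hsetEq : S s ∩ (Ici 0 ×ˢ (Ici 0 ×ˢ Ici 0))
          = {q : ℝ × ℝ × ℝ | 0 ≤ q.1 ∧ 0 ≤ q.2.1 ∧ 0 ≤ q.2.2 ∧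
            (1 + s * q.1) * (1 + s * q.2.1) * (1 + s * q.2.2) < t s} := by
        ext q
        simp only [Set.mem_inter_iff, Set.mem_prod, Set.mem_Ici, hSdef, Set.mem_setOf_eq]
        tauto
      have hup : κ (S s) ≤ ENNReal.ofReal (lam 0) *
          (ENNReal.ofReal (lam 1) * (ENNReal.ofReal (lam 2) * ENNReal.ofReal (u s))) := by
        calc κ (S s) ≤ ((ENNReal.ofReal (lam 0) • volume.restrict (Ici 0)).prod
            ((ENNReal.ofReal (lam 1) • volume.restrict (Ici 0)).prod
            (ENNReal.ofReal (lam 2) • volume.restrict (Ici 0)))) (S s) :=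
              Measure.le_iff'.1 hle1 (S s)
          _ = ENNReal.ofReal (lam 0) * (ENNReal.ofReal (lam 1) * (ENNReal.ofReal (lam 2) *
              volume (S s ∩ (Ici 0 ×ˢ (Ici 0 ×ˢ Ici 0))))) :=
              triple_apply _ _ _ measurableSet_Ici hSm
          _ = ENNReal.ofReal (lam 0) * (ENNReal.ofReal (lam 1) * (ENNReal.ofReal (lam 2) *
              ENNReal.ofReal (u s))) := by rw [hsetEq, hvol]
      have hfin : ENNReal.ofReal (lam 0) * (ENNReal.ofReal (lam 1) *
          (ENNReal.ofReal (lam 2) * ENNReal.ofReal (u s))) ≠ ⊤ :=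
        ENNReal.mul_ne_top ENNReal.ofReal_ne_top (ENNReal.mul_ne_top ENNReal.ofReal_ne_top
          (ENNReal.mul_ne_top ENNReal.ofReal_ne_top ENNReal.ofReal_ne_top))
      have := ENNReal.toReal_mono hfin hup
      rw [ENNReal.toReal_mul, ENNReal.toReal_mul, ENNReal.toReal_mul,
        ENNReal.toReal_ofReal (hlam 0).le, ENNReal.toReal_ofReal (hlam 1).le,
        ENNReal.toReal_ofReal (hlam 2).le, ENNReal.toReal_ofReal hu0] at this
      calc p s ≤ lam 0 * (lam 1 * (lam 2 * u s)) := this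
        _ = c * u s := by rw [hcdef]; ring
  -- step C : limits
  set hh : ℝ → ℝ := fun s => 2 * r^2 * (Real.log s)^2 * s ^ (-(3-2*r)) with hhdef
  set g : ℝ → ℝ := fun s =>
    2 * (r * Real.log s)^2 * (lam 0 * lam 1 * lam 2) * s ^ (-(3-2*r)) with hgdef
  have hgch : ∀ s, g s = c * hh s := by
    intro s; rw [hgdef, hhdef, hcdef]; ring
  have hratio : Tendsto (fun s => u s / hh s) atTop (𝓝 1) := by
    set A : ℝ → ℝ := fun s => (1 + 1/s) ^ (2*r) with hAdef
    set B : ℝ → ℝ := fun s => Real.log (1+s) / Real.log s with hBdef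
    have hEq : ∀ s : ℝ, 2 ≤ s → u s / hh s
        = A s * B s ^ 2 - A s * B s / (r * Real.log s) + A s / (2*r^2*(Real.log s)^2)
          - 1 / (2*r^2*(Real.log s)^2 * s ^ (2*r)) := by
      intro s hs
      have hs0 : (0:ℝ) < s := by linarith
      have hP : 0 < Real.log s := Real.log_pos (by linarith)
      have hE : (0:ℝ) < s ^ (2*r) := Real.rpow_pos_of_pos hs0 _
      have h1s : (0:ℝ) < 1 + 1/s := by positivity
      have hts : t s = A s * s ^ (2*r) := by
        rw [htdef, hAdef]; simp only
        rw [← Real.mul_rpow h1s.le hs0.le]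
        congr 1; field_simp; ring
      have hlt : Real.log (t s) = 2*r*(B s * Real.log s) := by
        rw [htdef, hBdef]; simp only
        rw [Real.log_rpow (by linarith), div_mul_cancel₀ _ hP.ne']
      have hinv : s ^ (-(3-2*r)) = s ^ (2*r) / s ^ (3:ℕ) := by
        rw [show s ^ (3:ℕ) = s ^ ((3:ℕ):ℝ) from (Real.rpow_natCast s 3).symm,
          ← Real.rpow_sub hs0]
        congr 1; push_cast; ring
      simp only [hudef, hhdef]
      rw [hlt, hts, hinv]
      have h3 : (0:ℝ) < s ^ (3:ℕ) := by positivity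
      field_simp
    have h1s : Tendsto (fun s : ℝ => 1 + 1/s) atTop (𝓝 1) := by
      simpa [one_div] using (tendsto_const_nhds.add (tendsto_inv_atTop_zero (𝕜 := ℝ)))
    have hA : Tendsto A atTop (𝓝 1) := by
      have hc := (continuousAt_rpow_const 1 (2*r) (Or.inl one_ne_zero)).tendsto.comp h1s
      simpa [hAdef, Real.one_rpow, Function.comp_def] using hc
    have hB : Tendsto B atTop (𝓝 1) := by
      have hlog1 : Tendsto (fun s : ℝ => Real.log (1 + 1/s)) atTop (𝓝 0) := by
        have := (Real.continuousAt_log (one_ne_zero)).tendsto.comp h1s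
        simpa [Real.log_one, Function.comp_def] using this
      have hinvlog : Tendsto (fun s : ℝ => (Real.log s)⁻¹) atTop (𝓝 0) :=
        tendsto_log_atTop.inv_tendsto_atTop
      have hlim : Tendsto (fun s : ℝ => 1 + Real.log (1 + 1/s) * (Real.log s)⁻¹)
          atTop (𝓝 1) := by
        simpa using tendsto_const_nhds.add (hlog1.mul hinvlog)
      apply hlim.congr'
      filter_upwards [eventually_ge_atTop (2:ℝ)] with s hs
      have hs0 : (0:ℝ) < s := by linarith
      have hP : 0 < Real.log s := Real.log_pos (by linarith)
      have h1s0 : (0:ℝ) < 1 + 1/s := by positivity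
      have : Real.log (1+s) = Real.log (1 + 1/s) + Real.log s := by
        rw [← Real.log_mul h1s0.ne' hs0.ne']
        congr 1; field_simp; ring
      rw [hBdef]; simp only
      rw [this, add_div, div_self hP.ne', div_eq_mul_inv]
      ring
    have hP2 : Tendsto (fun s : ℝ => 2*r^2*(Real.log s)^2) atTop atTop := by
      have h2 : Tendsto (fun s : ℝ => (Real.log s)^2) atTop atTop := by
        simpa [sq] using tendsto_log_atTop.atTop_mul_atTop₀ tendsto_log_atTop
      exact h2.const_mul_atTop (by positivity)
    have hterm2 : Tendsto (fun s : ℝ => A s * B s / (r * Real.log s)) atTop (𝓝 0) := by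
      have hInv : Tendsto (fun s : ℝ => (r * Real.log s)⁻¹) atTop (𝓝 0) :=
        (tendsto_log_atTop.const_mul_atTop hr0).inv_tendsto_atTop
      simpa [div_eq_mul_inv] using (hA.mul hB).mul hInv
    have hterm3 : Tendsto (fun s : ℝ => A s / (2*r^2*(Real.log s)^2)) atTop (𝓝 0) := by
      simpa [div_eq_mul_inv] using hA.mul hP2.inv_tendsto_atTop
    have hterm4 : Tendsto (fun s : ℝ => 1 / (2*r^2*(Real.log s)^2 * s ^ (2*r)))
        atTop (𝓝 0) := by
      have h0 := (hP2.atTop_mul_atTop₀ (tendsto_rpow_atTop (by linarith : (0:ℝ) < 2*r)))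
      have h4' : Tendsto (fun s : ℝ => (2*r^2*(Real.log s)^2 * s ^ (2*r))⁻¹) atTop (𝓝 0) :=
        h0.inv_tendsto_atTop
      simpa [one_div] using h4'
    have htotal : Tendsto (fun s : ℝ => A s * B s ^ 2 - A s * B s / (r * Real.log s)
        + A s / (2*r^2*(Real.log s)^2) - 1 / (2*r^2*(Real.log s)^2 * s ^ (2*r)))
        atTop (𝓝 1) := by
      have := (((hA.mul (hB.pow 2)).sub hterm2).add hterm3).sub hterm4
      simpa using this
    apply htotal.congr'
    filter_upwards [eventually_ge_atTop (2:ℝ)] with s hs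
    exact (hEq s hs).symm
  have hM0 : Tendsto M atTop (𝓝 0) := by
    have h1 : Tendsto (fun s : ℝ => (1+s) ^ (-(1-2*r))) atTop (𝓝 0) :=
      (tendsto_rpow_neg_atTop (by linarith : (0:ℝ) < 1-2*r)).comp
        (tendsto_atTop_add_const_left atTop 1 tendsto_id)
    have h5 : Tendsto (fun s : ℝ => (1+s)/s) atTop (𝓝 1) := by
      have : Tendsto (fun s : ℝ => s⁻¹ + 1) atTop (𝓝 1) := by
        simpa using (tendsto_inv_atTop_zero (𝕜 := ℝ)).add tendsto_const_nhds
      apply this.congr'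
      filter_upwards [eventually_ge_atTop (1:ℝ)] with s hs
      have hs0 : (0:ℝ) < s := by linarith
      field_simp
    have h6 : Tendsto (fun s : ℝ => s⁻¹) atTop (𝓝 0) := tendsto_inv_atTop_zero
    have hlim : Tendsto (fun s : ℝ => (1+s) ^ (-(1-2*r)) * ((1+s)/s) - s⁻¹) atTop (𝓝 0) := by
      simpa using (h1.mul h5).sub h6
    apply hlim.congr'
    filter_upwards [eventually_ge_atTop (1:ℝ)] with s hs
    have hs0 : (0:ℝ) < s := by linarith
    have hs1 : (0:ℝ) < 1 + s := by linarith
    have hr1 : t s = (1+s) ^ (-(1-2*r)) * (1+s) := by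
      rw [htdef]; simp only
      rw [← Real.rpow_add_one hs1.ne']
      congr 1; ring
    rw [hMdef]; simp only
    rw [sub_div, hr1]
    rw [mul_div_assoc, one_div]
  have hd : Tendsto d atTop (𝓝 c) := by
    have hex : ∀ i : Fin 3, Tendsto (fun s => Real.exp (-(lam i * M s))) atTop (𝓝 1) := by
      intro i
      have h1 : Tendsto (fun s => -(lam i * M s)) atTop (𝓝 0) := by
        simpa using ((hM0.const_mul (lam i)).neg)
      simpa [Function.comp_def] using (Real.continuous_exp.continuousAt (x := 0)).tendsto.comp h1
    have := (((hex 0).const_mul (lam 0)).mul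
      (((hex 1).const_mul (lam 1)).mul ((hex 2).const_mul (lam 2))))
    simpa [hddef, hcdef] using this
  -- positivity of g eventually
  have hgpos : ∀ s : ℝ, 2 ≤ s → 0 < g s := by
    intro s hs
    have hls : 0 < Real.log s := Real.log_pos (by linarith)
    have hrp : (0:ℝ) < s ^ (-(3-2*r)) := Real.rpow_pos_of_pos (by linarith) _
    rw [hgdef]
    have h2 : 0 < (r * Real.log s)^2 := by positivity
    have h3 : 0 < lam 0 * lam 1 * lam 2 := mul_pos (mul_pos (hlam 0) (hlam 1)) (hlam 2)
    positivity
  have hgne : ∀ᶠ s : ℝ in atTop, (fun s : ℝ =>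
      2 * (r * Real.log s)^2 * (lam 0 * lam 1 * lam 2) * s ^ (-(3-2*r))) s ≠ 0 := by
    filter_upwards [eventually_ge_atTop (2:ℝ)] with s hs
    exact (hgpos s hs).ne'
  rw [Asymptotics.isEquivalent_iff_tendsto_one hgne]
  have hup : Tendsto (fun s => (c * u s) / g s) atTop (𝓝 1) := by
    have : (fun s => (c * u s) / g s) = fun s => u s / hh s := by
      funext s; rw [hgch s, mul_div_mul_left _ _ hc.ne']
    rw [this]; exact hratio
  have hlo : Tendsto (fun s => (d s * u s) / g s) atTop (𝓝 1) := by
    have heq : (fun s => (d s * u s) / g s) = fun s => (d s / c) * (u s / hh s) := by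
      funext s; rw [hgch s, div_mul_div_comm]
    rw [heq]
    have h1 : Tendsto (fun s => d s / c) atTop (𝓝 1) := by
      have := hd.div tendsto_const_nhds hc.ne'
      simpa [div_self hc.ne', Pi.div_def] using this
    simpa using h1.mul hratio
  have key : Tendsto (fun s => p s / g s) atTop (𝓝 1) := by
    apply tendsto_of_tendsto_of_tendsto_of_le_of_le' hlo hup
    · filter_upwards [eventually_ge_atTop (2:ℝ)] with s hs
      exact (div_le_div_iff_of_pos_right (hgpos s hs)).2 (hbound s (by linarith)).1
    · filter_upwards [eventually_ge_atTop (2:ℝ)] with s hs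
      exact (div_le_div_iff_of_pos_right (hgpos s hs)).2 (hbound s (by linarith)).2
  have : (fun s : ℝ => (μ {ω |
      (1 + s * X 0 ω) * (1 + s * X 1 ω) * (1 + s * X 2 ω) < (1+s) ^ (2*r)}).toReal)
      / (fun s : ℝ => 2 * (r * Real.log s)^2 * (lam 0 * lam 1 * lam 2) * s ^ (-(3-2*r)))
      = fun s => p s / g s := by
    funext s
    simp only [Pi.div_apply, hpdef, hps s, hgdef]
  rw [this]
  exact key
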